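/- arXiv:0906.0186 — 2 statements merged into one kernel-verified Lean document; each statement's English description precedes it below -/
import Mathlib

section
/- If ν is strictly dominant, then for every N ∈ ℤ one has f_ν(U_N) = U_N, and the restriction of f_ν to U_N is a bijection from U_N onto U_N. -/
noncomputable section

open Matrix

/-- The ε-adic valuation on `L = k̄((ε))`, with `val 0 = ∞`. -/
def val {K : Type*} [Field K] (x : LaurentSeries K) : WithTop ℤ := x.orderTop

/-- The uniformizer ε of the Laurent series field. -/
def eps (K : Type*) [Field K] : LaurentSeries K := HahnSeries.single 1 1

/-- `σ : L → L` is the Frobenius automorphism: it fixes ε and raises each Laurent-series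
coefficient to the `q`-th power.  (This property determines `σ` uniquely.) -/
def IsFrobenius (K : Type*) [Field K] (q : ℕ)
    (σ : LaurentSeries K → LaurentSeries K) : Prop :=
  ∀ (x : LaurentSeries K) (n : ℤ), (σ x).coeff n = (x.coeff n) ^ q

/-- Upper unitriangular matrix: an element of `U_1`. -/
def Unitri {K : Type*} [Field K] {n : ℕ}
    (g : Matrix (Fin n) (Fin n) (LaurentSeries K)) : Prop :=
  (∀ i, g i i = 1) ∧ (∀ i j : Fin n, j < i → g i j = 0)

/-- `ν = (ν_1, …, ν_n)` is strictly dominant: `ν_1 > ν_2 > … > ν_n`. -/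
def StrictDominant {n : ℕ} (ν : Fin n → ℤ) : Prop :=
  ∀ p q : Fin n, p < q → ν q < ν p

/-- The diagonal matrix `ε^ν = diag(ε^{ν_1}, …, ε^{ν_n})`. -/
def epsDiag (K : Type*) [Field K] {n : ℕ} (ν : Fin n → ℤ) :
    Matrix (Fin n) (Fin n) (LaurentSeries K) :=
  Matrix.diagonal fun i => eps K ^ (ν i)

/-- The map `f_ν : U_1 → U_1`, `f_ν(h) = h⁻¹ · ε^ν · σ(h) · ε^{−ν}`. -/
def fnu {K : Type*} [Field K] {n : ℕ} (σ : LaurentSeries K → LaurentSeries K)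
    (ν : Fin n → ℤ) (g : Matrix (Fin n) (Fin n) (LaurentSeries K)) :
    Matrix (Fin n) (Fin n) (LaurentSeries K) :=
  g⁻¹ * epsDiag K ν * g.map σ * epsDiag K (fun i => -ν i)

/-- The subgroup `U(o_L)` of `U_1`: unitriangular matrices with entries in `o_L`. -/
def UO (K : Type*) [Field K] (n : ℕ) :
    Set (Matrix (Fin n) (Fin n) (LaurentSeries K)) :=
  {g | Unitri g ∧ ∀ p q : Fin n, 0 ≤ val (g p q)}

/-- `U_N = {g ∈ U_1 : val(g_{pq}) ≥ (q−p)·N for all p < q}`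
(equivalently `ε^{−μ}·U(o_L)·ε^{μ}` for `μ = (N, 2N, …, nN)`). -/
def UN (K : Type*) [Field K] (n : ℕ) (N : ℤ) :
    Set (Matrix (Fin n) (Fin n) (LaurentSeries K)) :=
  {g | Unitri g ∧ ∀ p q : Fin n, p < q →
    ((((q : ℤ) - (p : ℤ)) * N : ℤ) : WithTop ℤ) ≤ val (g p q)}

/-- `U_{m,N} = {g ∈ U_1 : val(g_{pq}) ≥ (q−p)·N + m for all p < q}`. -/
def UmN (K : Type*) [Field K] (n : ℕ) (m N : ℤ) :
    Set (Matrix (Fin n) (Fin n) (LaurentSeries K)) :=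
  {g | Unitri g ∧ ∀ p q : Fin n, p < q →
    ((((q : ℤ) - (p : ℤ)) * N + m : ℤ) : WithTop ℤ) ≤ val (g p q)}

/-! ### Auxiliary material -/

namespace FnuAux

variable {K : Type*} [Field K] {n : ℕ}

/-! #### Valuation lemmas -/

theorem val_of_coeff_pow {q : ℕ} (hq : q ≠ 0) {z w : LaurentSeries K}
    (h : ∀ m, z.coeff m = (w.coeff m) ^ q) : val z = val w := by
  by_cases hw : w = 0
  · have hz : z = 0 := by
      ext m; rw [h m, hw]; simp [zero_pow hq]
    rw [hz, hw]
  · obtain ⟨g, hg⟩ := WithTop.ne_top_iff_exists.1 (HahnSeries.orderTop_ne_top.2 hw)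
    have hwg : w.coeff g ≠ 0 := HahnSeries.coeff_orderTop_ne hg.symm
    have hzg : g ∈ z.support := by
      rw [HahnSeries.mem_support, h g]; exact pow_ne_zero _ hwg
    have hmin : ∀ g' ∈ z.support, g ≤ g' := by
      intro g' hg'
      have hwg' : w.coeff g' ≠ 0 := by
        intro h0
        rw [HahnSeries.mem_support, h g', h0, zero_pow hq] at hg'
        exact hg' rfl
      have := HahnSeries.orderTop_le_of_coeff_ne_zero hwg'
      rw [← hg] at this
      exact_mod_cast this
    have := HahnSeries.orderTop_eq_of_le hzg hmin
    rw [val, val, this, hg]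

theorem val_mul_ge {x y : LaurentSeries K} : val x + val y ≤ val (x * y) :=
  le_of_eq (HahnSeries.orderTop_mul _ _).symm

theorem le_val_add {C : WithTop ℤ} {x y : LaurentSeries K}
    (hx : C ≤ val x) (hy : C ≤ val y) : C ≤ val (x + y) :=
  le_trans (le_min hx hy) HahnSeries.min_orderTop_le_orderTop_add

theorem le_val_sub {C : WithTop ℤ} {x y : LaurentSeries K}
    (hx : C ≤ val x) (hy : C ≤ val y) : C ≤ val (x - y) :=
  le_trans (le_min hx hy) HahnSeries.min_orderTop_le_orderTop_sub

theorem le_val_sum {ι : Type*} {s : Finset ι} {f : ι → LaurentSeries K} {C : WithTop ℤ}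
    (h : ∀ i ∈ s, C ≤ val (f i)) : C ≤ val (∑ i ∈ s, f i) := by
  classical
  induction s using Finset.induction with
  | empty => simp [val]
  | insert _ _ hx ih =>
    rw [Finset.sum_insert hx]
    exact le_val_add (h _ (Finset.mem_insert_self _ _))
      (ih fun i hi => h i (Finset.mem_insert_of_mem hi))

theorem val_single (a : ℤ) : val (HahnSeries.single a (1 : K)) = a :=
  HahnSeries.orderTop_single one_ne_zero

theorem le_val_mul' {a b : ℤ} {x y : LaurentSeries K}
    (hx : (a : WithTop ℤ) ≤ val x) (hy : (b : WithTop ℤ) ≤ val y) :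
    ((a + b : ℤ) : WithTop ℤ) ≤ val (x * y) := by
  push_cast
  exact le_trans (add_le_add hx hy) val_mul_ge

theorem le_val_single_mul {a b : ℤ} {y : LaurentSeries K}
    (hy : (b : WithTop ℤ) ≤ val y) :
    ((a + b : ℤ) : WithTop ℤ) ≤ val (HahnSeries.single a (1 : K) * y) :=
  le_val_mul' (le_of_eq (val_single a).symm) hy

/-! #### The twisted scalar equation `x + c = ε^d σ(x)` -/

theorem scalar_unique {q : ℕ} (hq : 0 < q) {σ : LaurentSeries K → LaurentSeries K}
    (hσ : IsFrobenius K q σ)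
    (hsub : ∀ a b : K, (a - b) ^ q = a ^ q - b ^ q)
    {d : ℤ} (hd : 1 ≤ d) {x y c : LaurentSeries K}
    (hx : x + c = HahnSeries.single d 1 * σ x)
    (hy : y + c = HahnSeries.single d 1 * σ y) : x = y := by
  have hdiff : x - y = HahnSeries.single d 1 * (σ x - σ y) := by
    rw [mul_sub, ← hx, ← hy]; ring
  have hv : val (σ x - σ y) = val (x - y) :=
    val_of_coeff_pow hq.ne' (fun m => by
      rw [HahnSeries.coeff_sub, HahnSeries.coeff_sub, hσ x m, hσ y m, hsub])
  by_contra hne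
  have h0 : x - y ≠ 0 := sub_ne_zero.2 hne
  obtain ⟨m, hm⟩ := WithTop.ne_top_iff_exists.1 (HahnSeries.orderTop_ne_top.2 h0)
  have hkey : ((d + m : ℤ) : WithTop ℤ) ≤ val (x - y) := by
    rw [hdiff]
    exact le_val_single_mul (by rw [hv, val, ← hm])
  rw [val, ← hm] at hkey
  have : d + m ≤ m := by exact_mod_cast hkey
  omega

/-- The coefficient sequence of the solution of `x + c = ε^d σ(x)`, built recursively. -/
def USeq (q d : ℕ) (c : ℤ → K) (M : ℤ) : ℕ → K
  | k => (if h : 0 < d ∧ d ≤ k then USeq q d c M (k - d) else 0) ^ q - c (M + k)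
  termination_by k => k
  decreasing_by exact Nat.sub_lt (Nat.lt_of_lt_of_le h.1 h.2) h.1

/-- The solution of `x + c = ε^d σ(x)`. -/
def solveX (q : ℕ) (d : ℤ) (c : LaurentSeries K) : LaurentSeries K :=
  HahnSeries.single c.order 1 *
    HahnSeries.ofPowerSeries ℤ K (PowerSeries.mk (USeq q d.toNat (fun m => c.coeff m) c.order))

theorem solveX_coeff (q : ℕ) (d : ℤ) (c : LaurentSeries K) (m : ℤ) :
    (solveX q d c).coeff m =
      if c.order ≤ m then USeq q d.toNat (fun m => c.coeff m) c.order (m - c.order).toNat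
      else 0 := by
  set M := c.order
  set u := USeq q d.toNat (fun m => c.coeff m) M
  have h1 : (solveX q d c).coeff m
      = (HahnSeries.ofPowerSeries ℤ K (PowerSeries.mk u)).coeff (m - M) := by
    rw [solveX]
    have := HahnSeries.coeff_single_mul_add (r := (1 : K))
      (x := HahnSeries.ofPowerSeries ℤ K (PowerSeries.mk u)) (a := m - M) (b := M)
    rw [show m - M + M = m by ring] at this
    rw [this, one_mul]
  rw [h1, PowerSeries.coeff_coe, PowerSeries.coeff_mk]
  by_cases h2 : M ≤ m
  · rw [if_neg (by omega), if_pos h2]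
    congr 1
    omega
  · rw [if_pos (by omega), if_neg h2]

theorem solveX_spec {q : ℕ} (hq : 0 < q) {σ : LaurentSeries K → LaurentSeries K}
    (hσ : IsFrobenius K q σ) {d : ℤ} (hd : 1 ≤ d) (c : LaurentSeries K) :
    solveX q d c + c = HahnSeries.single d 1 * σ (solveX q d c) := by
  set x := solveX q d c with hxdef
  have hrhs : ∀ m : ℤ, (HahnSeries.single d (1 : K) * σ x).coeff m = (x.coeff (m - d)) ^ q := by
    intro m
    have hm : (HahnSeries.single d (1 : K) * σ x).coeff ((m - d) + d) = 1 * (σ x).coeff (m - d) :=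
      HahnSeries.coeff_single_mul_add
    rw [show (m - d) + d = m by ring, one_mul] at hm
    rw [hm, hσ]
  ext m
  rw [HahnSeries.coeff_add, hrhs m]
  set M := c.order with hM
  have hcM : ∀ k : ℤ, k < M → c.coeff k = 0 := fun k hk =>
    HahnSeries.coeff_eq_zero_of_lt_order hk
  by_cases h1 : M ≤ m
  · rw [hxdef, solveX_coeff, ← hM, if_pos h1]
    by_cases h2 : M ≤ m - d
    · rw [solveX_coeff, ← hM, if_pos h2]
      conv_lhs => rw [USeq]
      rw [dif_pos (show 0 < d.toNat ∧ d.toNat ≤ (m - M).toNat by omega)]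
      rw [show (m - M).toNat - d.toNat = (m - d - M).toNat by omega,
        show M + ((m - M).toNat : ℤ) = m by omega]
      ring
    · rw [solveX_coeff, ← hM, if_neg h2]
      conv_lhs => rw [USeq]
      rw [dif_neg (show ¬(0 < d.toNat ∧ d.toNat ≤ (m - M).toNat) by omega)]
      rw [show M + ((m - M).toNat : ℤ) = m by omega]
      ring
  · rw [hxdef, solveX_coeff, ← hM, if_neg h1, solveX_coeff, ← hM,
      if_neg (show ¬ M ≤ m - d by omega), hcM m (by omega), zero_pow hq.ne']
    ring

theorem solve_val {q : ℕ} (hq : 0 < q) {σ : LaurentSeries K → LaurentSeries K}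
    (hσ : IsFrobenius K q σ) {d : ℤ} (hd : 1 ≤ d)
    {x c : LaurentSeries K} (heq : x + c = HahnSeries.single d 1 * σ x) :
    val c ≤ val x := by
  have hσv : val (σ x) = val x := val_of_coeff_pow hq.ne' (fun m => hσ x m)
  have hx : x = HahnSeries.single d 1 * σ x - c := by rw [← heq]; ring
  have hA : (d : WithTop ℤ) + val x ≤ val (HahnSeries.single d 1 * σ x) := by
    rw [← hσv, ← val_single (K := K) d]
    exact val_mul_ge
  have h1 : min ((d : WithTop ℤ) + val x) (val c) ≤ val x := by
    conv_rhs => rw [hx]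
    exact le_val_sub (le_trans (min_le_left _ _) hA) (min_le_right _ _)
  rcases le_total (val c) ((d : WithTop ℤ) + val x) with h | h
  · rwa [min_eq_right h] at h1
  · rw [min_eq_left h] at h1
    by_cases hvx : val x = ⊤
    · rw [hvx]; exact le_top
    · obtain ⟨m, hm⟩ := WithTop.ne_top_iff_exists.1 hvx
      rw [← hm] at h1
      exfalso
      have : d + m ≤ m := by exact_mod_cast h1
      omega

/-! #### Matrix lemmas -/

theorem sigma_zero {q : ℕ} (hq : 0 < q) {σ : LaurentSeries K → LaurentSeries K}
    (hσ : IsFrobenius K q σ) : σ 0 = 0 := by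
  ext m; rw [hσ]; simp [zero_pow hq.ne']

theorem sigma_one {q : ℕ} (hq : 0 < q) {σ : LaurentSeries K → LaurentSeries K}
    (hσ : IsFrobenius K q σ) : σ 1 = 1 := by
  ext m
  rw [hσ, HahnSeries.coeff_one]
  by_cases h : m = 0 <;> simp [HahnSeries.coeff_one, h, zero_pow hq.ne']

theorem eps_ne_zero : eps K ≠ 0 := HahnSeries.single_ne_zero one_ne_zero

theorem eps_zpow_eq {d : ℤ} (hd : 0 ≤ d) : eps K ^ d = HahnSeries.single d 1 := by
  obtain ⟨k, rfl⟩ := Int.eq_ofNat_of_zero_le hd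
  rw [zpow_natCast, eps, HahnSeries.single_pow]
  simp

theorem mul_apply_of_lt {X Y : Matrix (Fin n) (Fin n) (LaurentSeries K)}
    (hX : ∀ i j : Fin n, j < i → X i j = 0) (hY : ∀ i j : Fin n, j < i → Y i j = 0)
    {p q : Fin n} (hpq : p < q) :
    (X * Y) p q = X p p * Y p q + (∑ r ∈ Finset.Ioo p q, X p r * Y r q) + X p q * Y q q := by
  rw [Matrix.mul_apply]
  have hz : ∀ r ∈ Finset.univ, r ∉ Finset.Icc p q → X p r * Y r q = 0 := by
    intro r _ hr
    rw [Finset.mem_Icc] at hr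
    push_neg at hr
    rcases lt_or_ge r p with h | h
    · rw [hX p r h, zero_mul]
    · rw [hY r q (hr h), mul_zero]
  rw [← Finset.sum_subset (Finset.subset_univ (Finset.Icc p q)) hz,
    Finset.Icc_eq_cons_Ioc (le_of_lt hpq), Finset.sum_cons,
    Finset.Ioc_eq_cons_Ioo hpq, Finset.sum_cons]
  ring

theorem mul_apply_diag {X Y : Matrix (Fin n) (Fin n) (LaurentSeries K)}
    (hX : ∀ i j : Fin n, j < i → X i j = 0) (hY : ∀ i j : Fin n, j < i → Y i j = 0)
    (p : Fin n) : (X * Y) p p = X p p * Y p p := by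
  rw [Matrix.mul_apply]
  apply Finset.sum_eq_single p
  · intro r _ hr
    rcases lt_or_gt_of_ne hr with h | h
    · rw [hX p r h, zero_mul]
    · rw [hY r p h, mul_zero]
  · intro h; exact absurd (Finset.mem_univ p) h

theorem mul_apply_of_gt {X Y : Matrix (Fin n) (Fin n) (LaurentSeries K)}
    (hX : ∀ i j : Fin n, j < i → X i j = 0) (hY : ∀ i j : Fin n, j < i → Y i j = 0)
    {p q : Fin n} (hpq : q < p) : (X * Y) p q = 0 := by
  rw [Matrix.mul_apply]
  apply Finset.sum_eq_zero
  intro r _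
  rcases lt_or_ge r p with h | h
  · rw [hX p r h, zero_mul]
  · rw [hY r q (lt_of_lt_of_le hpq h), mul_zero]

theorem unitri_mul {X Y : Matrix (Fin n) (Fin n) (LaurentSeries K)}
    (hX : Unitri X) (hY : Unitri Y) : Unitri (X * Y) := by
  constructor
  · intro p
    rw [mul_apply_diag hX.2 hY.2, hX.1, hY.1, one_mul]
  · intro i j h
    exact mul_apply_of_gt hX.2 hY.2 h

theorem unitri_det {X : Matrix (Fin n) (Fin n) (LaurentSeries K)}
    (hX : Unitri X) : X.det = 1 := by
  rw [Matrix.det_of_upperTriangular (fun i j hij => hX.2 i j hij)]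
  exact Finset.prod_eq_one fun i _ => hX.1 i

theorem unitri_inv {X : Matrix (Fin n) (Fin n) (LaurentSeries K)} (hX : Unitri X) :
    Unitri X⁻¹ ∧ X⁻¹ * X = 1 ∧ X * X⁻¹ = 1 := by
  have hdet : IsUnit X.det := by rw [unitri_det hX]; exact isUnit_one
  have hXi := Matrix.nonsing_inv_mul X hdet
  have hXi' := Matrix.mul_nonsing_inv X hdet
  haveI : Invertible X := X.invertibleOfIsUnitDet hdet
  have hlow : ∀ i j : Fin n, j < i → X⁻¹ i j = 0 := fun i j h =>
    Matrix.blockTriangular_inv_of_blockTriangular (fun i j hij => hX.2 i j hij) h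
  have hdiag : ∀ p : Fin n, X⁻¹ p p = 1 := by
    intro p
    have h2 := congrArg (fun M => M p p) hXi
    simp only [Matrix.one_apply_eq] at h2
    rwa [mul_apply_diag hlow hX.2 p, hX.1, mul_one] at h2
  exact ⟨⟨hdiag, hlow⟩, hXi, hXi'⟩

/-- The matrix `ε^ν σ(h) ε^{-ν}`. -/
def Amat (σ : LaurentSeries K → LaurentSeries K) (ν : Fin n → ℤ)
    (h : Matrix (Fin n) (Fin n) (LaurentSeries K)) :
    Matrix (Fin n) (Fin n) (LaurentSeries K) :=
  epsDiag K ν * h.map σ * epsDiag K (fun i => -ν i)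

theorem Amat_apply (σ : LaurentSeries K → LaurentSeries K) (ν : Fin n → ℤ)
    (h : Matrix (Fin n) (Fin n) (LaurentSeries K)) (p q : Fin n) :
    Amat σ ν h p q = eps K ^ (ν p) * σ (h p q) * eps K ^ (-ν q) := by
  simp [Amat, epsDiag, Matrix.diagonal_mul, Matrix.mul_diagonal, Matrix.map_apply]

theorem Amat_apply_lt {q : ℕ} (hq : 0 < q) {σ : LaurentSeries K → LaurentSeries K}
    (hσ : IsFrobenius K q σ) {ν : Fin n → ℤ} (hν : StrictDominant ν)
    (h : Matrix (Fin n) (Fin n) (LaurentSeries K)) {p r : Fin n} (hpr : p < r) :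
    Amat σ ν h p r = HahnSeries.single (ν p - ν r) 1 * σ (h p r) := by
  have h0 : (0 : ℤ) ≤ ν p - ν r := by have := hν p r hpr; omega
  rw [Amat_apply, mul_comm (eps K ^ ν p) (σ (h p r)), mul_assoc,
    ← zpow_add₀ (eps_ne_zero (K := K)), show ν p + -ν r = ν p - ν r by ring,
    eps_zpow_eq h0, mul_comm]

theorem Amat_unitri {q : ℕ} (hq : 0 < q) {σ : LaurentSeries K → LaurentSeries K}
    (hσ : IsFrobenius K q σ) {ν : Fin n → ℤ}
    {h : Matrix (Fin n) (Fin n) (LaurentSeries K)} (hh : Unitri h) :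
    Unitri (Amat σ ν h) := by
  constructor
  · intro p
    rw [Amat_apply, hh.1, sigma_one hq hσ, mul_one, ← zpow_add₀ (eps_ne_zero (K := K)),
      add_neg_cancel, zpow_zero]
  · intro i j hij
    rw [Amat_apply, hh.2 i j hij, sigma_zero hq hσ, mul_zero, zero_mul]

theorem mul_fnu {σ : LaurentSeries K → LaurentSeries K} {ν : Fin n → ℤ}
    {h : Matrix (Fin n) (Fin n) (LaurentSeries K)} (hh : Unitri h) :
    h * fnu σ ν h = Amat σ ν h := by
  rw [fnu, Amat]
  simp only [← Matrix.mul_assoc]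
  rw [(unitri_inv hh).2.2, Matrix.one_mul]

theorem fnu_decomp {σ : LaurentSeries K → LaurentSeries K} {ν : Fin n → ℤ}
    (h : Matrix (Fin n) (Fin n) (LaurentSeries K)) :
    fnu σ ν h = h⁻¹ * Amat σ ν h := by
  rw [fnu, Amat]
  simp only [← Matrix.mul_assoc]

theorem fnu_eq_of_mul {σ : LaurentSeries K → LaurentSeries K} {ν : Fin n → ℤ}
    {h g : Matrix (Fin n) (Fin n) (LaurentSeries K)} (hh : Unitri h)
    (heq : h * g = Amat σ ν h) : fnu σ ν h = g := by
  have h1 : h⁻¹ * (h * g) = h⁻¹ * Amat σ ν h := by rw [heq]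
  rw [← Matrix.mul_assoc, (unitri_inv hh).2.1, Matrix.one_mul] at h1
  rw [h1, fnu, Amat]
  simp only [← Matrix.mul_assoc]

/-- Extraction of the `(p,q)` entry of the matrix equation `h·g = A`. -/
theorem entry_eq {σ : LaurentSeries K → LaurentSeries K} {ν : Fin n → ℤ}
    {h g : Matrix (Fin n) (Fin n) (LaurentSeries K)} (hh : Unitri h) (hg : Unitri g)
    (heq : h * g = Amat σ ν h) {p q : Fin n} (hpq : p < q) :
    g p q + (∑ r ∈ Finset.Ioo p q, h p r * g r q) + h p q = Amat σ ν h p q := by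
  have h1 := (Matrix.ext_iff.2 heq) p q
  rw [mul_apply_of_lt hh.2 hg.2 hpq, hh.1, hg.1, one_mul, mul_one] at h1
  exact h1

theorem mem_UN_of_eq {q0 : ℕ} (hq : 0 < q0) {σ : LaurentSeries K → LaurentSeries K}
    (hσ : IsFrobenius K q0 σ) {ν : Fin n → ℤ} (hν : StrictDominant ν) {N : ℤ}
    {h g : Matrix (Fin n) (Fin n) (LaurentSeries K)}
    (hh : h ∈ UN K n N) (hgu : Unitri g) (heq : h * g = Amat σ ν h) :
    g ∈ UN K n N := by
  obtain ⟨hhu, hhv⟩ := hh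
  refine ⟨hgu, ?_⟩
  suffices H : ∀ (k : ℕ) (p q : Fin n), (q : ℕ) - (p : ℕ) ≤ k → p < q →
      ((((q : ℤ) - (p : ℤ)) * N : ℤ) : WithTop ℤ) ≤ val (g p q) by
    intro p q hpq
    exact H n p q (by have := q.isLt; omega) hpq
  intro k
  induction k with
  | zero =>
    intro p q hle hpq
    rw [Fin.lt_def] at hpq; omega
  | succ k ih =>
    intro p q hle hpq
    have hent := entry_eq hhu hgu heq hpq
    have hgpq : g p q = Amat σ ν h p q - h p q - ∑ r ∈ Finset.Ioo p q, h p r * g r q := by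
      linear_combination hent
    rw [hgpq]
    refine le_val_sub (le_val_sub ?_ (hhv p q hpq)) ?_
    · rw [Amat_apply_lt hq hσ hν h hpq]
      have hσv : val (σ (h p q)) = val (h p q) :=
        val_of_coeff_pow hq.ne' (fun m => hσ _ m)
      refine le_trans ?_ (le_val_single_mul (a := ν p - ν q)
        (by rw [hσv]; exact hhv p q hpq))
      rw [WithTop.coe_le_coe]
      linarith [hν p q hpq]
    · apply le_val_sum
      intro r hr
      rw [Finset.mem_Ioo] at hr
      have hr1 : (p : ℕ) < (r : ℕ) := hr.1
      have hr2 : (r : ℕ) < (q : ℕ) := hr.2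
      have h1 := hhv p r hr.1
      have h2 := ih r q (by omega) hr.2
      have h3 := le_val_mul' h1 h2
      rwa [show ((r : ℤ) - (p : ℤ)) * N + ((q : ℤ) - (r : ℤ)) * N
        = ((q : ℤ) - (p : ℤ)) * N by ring] at h3

/-- The solution matrix of `H · g = ε^ν σ(H) ε^{-ν}`, built superdiagonal by
superdiagonal. -/
def buildH (q : ℕ) (ν : Fin n → ℤ) (g : Matrix (Fin n) (Fin n) (LaurentSeries K)) :
    Fin n → Fin n → LaurentSeries K
  | p, r =>
    if _h : p < r then
      solveX q (ν p - ν r)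
        (g p r + ∑ s ∈ (Finset.Ioo p r).attach, buildH q ν g p s.1 * g s.1 r)
    else if p = r then 1 else 0
  termination_by p r => (r : ℕ) - (p : ℕ)
  decreasing_by
    have hs := s.2
    rw [Finset.mem_Ioo, Fin.lt_def, Fin.lt_def] at hs
    rw [Fin.lt_def] at _h
    omega

theorem buildH_of_lt (q : ℕ) (ν : Fin n → ℤ) (g : Matrix (Fin n) (Fin n) (LaurentSeries K))
    {p r : Fin n} (h : p < r) :
    buildH q ν g p r = solveX q (ν p - ν r)
      (g p r + ∑ s ∈ Finset.Ioo p r, buildH q ν g p s * g s r) := by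
  rw [buildH, dif_pos h, Finset.sum_attach (Finset.Ioo p r) (fun s => buildH q ν g p s * g s r)]

theorem buildH_unitri (q : ℕ) (ν : Fin n → ℤ)
    (g : Matrix (Fin n) (Fin n) (LaurentSeries K)) :
    Unitri (Matrix.of (buildH q ν g)) := by
  constructor
  · intro p
    show buildH q ν g p p = 1
    rw [buildH, dif_neg (lt_irrefl p), if_pos rfl]
  · intro i j h
    show buildH q ν g i j = 0
    rw [buildH, dif_neg (asymm h), if_neg h.ne']

theorem buildH_scalar {q : ℕ} (hq : 0 < q) {σ : LaurentSeries K → LaurentSeries K}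
    (hσ : IsFrobenius K q σ) {ν : Fin n → ℤ} (hν : StrictDominant ν)
    (g : Matrix (Fin n) (Fin n) (LaurentSeries K)) {p r : Fin n} (h : p < r) :
    buildH q ν g p r + (g p r + ∑ s ∈ Finset.Ioo p r, buildH q ν g p s * g s r)
      = HahnSeries.single (ν p - ν r) 1 * σ (buildH q ν g p r) := by
  conv_lhs => rw [buildH_of_lt q ν g h]
  conv_rhs => rw [buildH_of_lt q ν g h]
  exact solveX_spec hq hσ (by have := hν p r h; omega) _

theorem buildH_eq {q : ℕ} (hq : 0 < q) {σ : LaurentSeries K → LaurentSeries K}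
    (hσ : IsFrobenius K q σ) {ν : Fin n → ℤ} (hν : StrictDominant ν)
    {g : Matrix (Fin n) (Fin n) (LaurentSeries K)} (hg : Unitri g) :
    (Matrix.of (buildH q ν g)) * g = Amat σ ν (Matrix.of (buildH q ν g)) := by
  have hHu : Unitri (Matrix.of (buildH q ν g)) := buildH_unitri q ν g
  refine Matrix.ext fun p r => ?_
  rcases lt_trichotomy p r with hlt | heq | hgt
  · rw [mul_apply_of_lt hHu.2 hg.2 hlt, Amat_apply_lt hq hσ hν _ hlt,
      hHu.1, hg.1, one_mul, mul_one]
    have hsc := buildH_scalar hq hσ hν g hlt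
    simp only [Matrix.of_apply]
    linear_combination hsc
  · subst heq
    rw [mul_apply_diag hHu.2 hg.2, hHu.1, hg.1, one_mul, (Amat_unitri hq hσ hHu).1 p]
  · rw [mul_apply_of_gt hHu.2 hg.2 hgt, Amat_apply, hHu.2 p r hgt,
      sigma_zero hq hσ, mul_zero, zero_mul]

theorem buildH_mem {q : ℕ} (hq : 0 < q) {σ : LaurentSeries K → LaurentSeries K}
    (hσ : IsFrobenius K q σ) {ν : Fin n → ℤ} (hν : StrictDominant ν) {N : ℤ}
    {g : Matrix (Fin n) (Fin n) (LaurentSeries K)} (hg : g ∈ UN K n N) :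
    Matrix.of (buildH q ν g) ∈ UN K n N := by
  obtain ⟨hgu, hgv⟩ := hg
  refine ⟨buildH_unitri q ν g, ?_⟩
  suffices H : ∀ (k : ℕ) (p r : Fin n), (r : ℕ) - (p : ℕ) ≤ k → p < r →
      ((((r : ℤ) - (p : ℤ)) * N : ℤ) : WithTop ℤ) ≤ val (buildH q ν g p r) by
    intro p r hpr
    exact H n p r (by have := r.isLt; omega) hpr
  intro k
  induction k with
  | zero =>
    intro p r hle hpr
    rw [Fin.lt_def] at hpr; omega
  | succ k ih =>
    intro p r hle hpr
    have hval := solve_val hq hσ (show (1 : ℤ) ≤ ν p - ν r by have := hν p r hpr; omega)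
      (buildH_scalar hq hσ hν g hpr)
    refine le_trans ?_ hval
    apply le_val_add
    · exact hgv p r hpr
    · apply le_val_sum
      intro s hs
      rw [Finset.mem_Ioo] at hs
      have hs1 : (p : ℕ) < (s : ℕ) := hs.1
      have hs2 : (s : ℕ) < (r : ℕ) := hs.2
      have h1 := ih p s (by omega) hs.1
      have h2 := hgv s r hs.2
      have h3 := le_val_mul' h1 h2
      rwa [show ((s : ℤ) - (p : ℤ)) * N + ((r : ℤ) - (s : ℤ)) * N
        = ((r : ℤ) - (p : ℤ)) * N by ring] at h3

theorem unique_sol {q : ℕ} (hq : 0 < q) {σ : LaurentSeries K → LaurentSeries K}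
    (hσ : IsFrobenius K q σ)
    (hsub : ∀ a b : K, (a - b) ^ q = a ^ q - b ^ q)
    {ν : Fin n → ℤ} (hν : StrictDominant ν)
    {g h₁ h₂ : Matrix (Fin n) (Fin n) (LaurentSeries K)}
    (hg : Unitri g) (h1u : Unitri h₁) (h2u : Unitri h₂)
    (e1 : h₁ * g = Amat σ ν h₁) (e2 : h₂ * g = Amat σ ν h₂) : h₁ = h₂ := by
  suffices H : ∀ (k : ℕ) (p r : Fin n), (r : ℕ) - (p : ℕ) ≤ k → h₁ p r = h₂ p r by
    refine Matrix.ext fun p r => ?_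
    exact H n p r (by have := r.isLt; omega)
  intro k
  induction k with
  | zero =>
    intro p r hle
    rcases lt_trichotomy p r with hlt | heq | hgt
    · rw [Fin.lt_def] at hlt; omega
    · subst heq; rw [h1u.1, h2u.1]
    · rw [h1u.2 p r hgt, h2u.2 p r hgt]
  | succ k ih =>
    intro p r hle
    rcases lt_trichotomy p r with hlt | heq | hgt
    · have hent1 := entry_eq h1u hg e1 hlt
      have hent2 := entry_eq h2u hg e2 hlt
      rw [Amat_apply_lt hq hσ hν _ hlt] at hent1 hent2
      have hsumeq : ∑ s ∈ Finset.Ioo p r, h₂ p s * g s r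
          = ∑ s ∈ Finset.Ioo p r, h₁ p s * g s r := by
        apply Finset.sum_congr rfl
        intro s hs
        rw [Finset.mem_Ioo] at hs
        have hs1 : (p : ℕ) < (s : ℕ) := hs.1
        have hs2 : (s : ℕ) < (r : ℕ) := hs.2
        rw [ih p s (by omega)]
      refine scalar_unique hq hσ hsub
        (show (1 : ℤ) ≤ ν p - ν r by have := hν p r hlt; omega)
        (c := g p r + ∑ s ∈ Finset.Ioo p r, h₁ p s * g s r) ?_ ?_
      · linear_combination hent1
      · rw [← hsumeq]; linear_combination hent2
    · subst heq; rw [h1u.1, h2u.1]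
    · rw [h1u.2 p r hgt, h2u.2 p r hgt]

end FnuAux

/-- if `ν` is strictly dominant then for every `N ∈ ℤ`, `f_ν(U_N) = U_N`,
and the restriction of `f_ν` to `U_N` is a bijection from `U_N` onto `U_N`. -/
theorem fnu_bijective_on_UN (F : Type*) [Field F] [Fintype F] (n : ℕ) (hn : 2 ≤ n)
    (σ : LaurentSeries (AlgebraicClosure F) → LaurentSeries (AlgebraicClosure F))
    (hσ : IsFrobenius (AlgebraicClosure F) (Fintype.card F) σ)
    (ν : Fin n → ℤ) (hν : StrictDominant ν) (N : ℤ) :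
    fnu σ ν '' UN (AlgebraicClosure F) n N = UN (AlgebraicClosure F) n N ∧
    Set.BijOn (fnu σ ν) (UN (AlgebraicClosure F) n N) (UN (AlgebraicClosure F) n N) := by
  classical
  set K := AlgebraicClosure F
  have hq : 0 < Fintype.card F := Fintype.card_pos
  -- characteristic facts
  haveI hcF : CharP F (ringChar F) := ringChar.charP F
  obtain ⟨e, hpprime, hcard⟩ := FiniteField.card F (ringChar F)
  haveI : Fact (ringChar F).Prime := ⟨hpprime⟩
  haveI : CharP K (ringChar F) :=
    charP_of_injective_algebraMap (algebraMap F K).injective (ringChar F)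
  have hsub : ∀ a b : K, (a - b) ^ (Fintype.card F)
      = a ^ (Fintype.card F) - b ^ (Fintype.card F) := by
    intro a b
    rw [hcard]
    exact sub_pow_char_pow a b (e : ℕ)
  have hmaps : Set.MapsTo (fnu σ ν) (UN K n N) (UN K n N) := by
    intro h hh
    have hhu := hh.1
    have heqA : h * fnu σ ν h = FnuAux.Amat σ ν h := FnuAux.mul_fnu hhu
    have hfu : Unitri (fnu σ ν h) := by
      rw [FnuAux.fnu_decomp]
      exact FnuAux.unitri_mul (FnuAux.unitri_inv hhu).1 (FnuAux.Amat_unitri hq hσ hhu)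
    exact FnuAux.mem_UN_of_eq hq hσ hν hh hfu heqA
  have hinj : Set.InjOn (fnu σ ν) (UN K n N) := by
    intro h₁ hh₁ h₂ hh₂ hfeq
    have hg : fnu σ ν h₁ ∈ UN K n N := hmaps hh₁
    refine FnuAux.unique_sol hq hσ hsub hν hg.1 hh₁.1 hh₂.1 (FnuAux.mul_fnu hh₁.1) ?_
    rw [hfeq]
    exact FnuAux.mul_fnu hh₂.1
  have hsurj : Set.SurjOn (fnu σ ν) (UN K n N) (UN K n N) := by
    intro g hg
    exact ⟨Matrix.of (FnuAux.buildH (Fintype.card F) ν g),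
      FnuAux.buildH_mem hq hσ hν hg,
      FnuAux.fnu_eq_of_mul (FnuAux.buildH_unitri _ ν g) (FnuAux.buildH_eq hq hσ hν hg.1)⟩
  exact ⟨Set.Subset.antisymm (Set.mapsTo_iff_image_subset.1 hmaps) hsurj, hmaps, hinj, hsurj⟩
end
end

section
/- Let ν be strictly dominant, N ∈ ℤ, and m > 0 an integer. If g, g' ∈ U_N and g⁻¹·g' ∈ U_{m,N}, then (f_ν(g))⁻¹·f_ν(g') ∈ U_{m,N}. -/
noncomputable section

open Matrix

/- ===================== Auxiliary development ===================== -/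

section ValLemmas

variable {K : Type*} [Field K]

lemma val_zero : val (0 : LaurentSeries K) = ⊤ := HahnSeries.orderTop_zero

lemma val_one : val (1 : LaurentSeries K) = 0 := HahnSeries.orderTop_one

lemma min_le_val_add (x y : LaurentSeries K) : min (val x) (val y) ≤ val (x + y) :=
  HahnSeries.min_orderTop_le_orderTop_add

lemma add_le_val_mul (x y : LaurentSeries K) : val x + val y ≤ val (x * y) :=
  (HahnSeries.orderTop_mul x y).ge

lemma le_val_sum {ι : Type*} (s : Finset ι) (f : ι → LaurentSeries K) (c : WithTop ℤ)
    (h : ∀ i ∈ s, c ≤ val (f i)) : c ≤ val (∑ i ∈ s, f i) := by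
  classical
  induction s using Finset.induction with
  | empty => simp [val_zero]
  | insert _ _ hx ih =>
    rename_i a s
    rw [Finset.sum_insert hx]
    refine le_trans (le_min (h a (Finset.mem_insert_self a s))
      (ih fun i hi => h i (Finset.mem_insert_of_mem hi))) (min_le_val_add _ _)

lemma eps_ne_zero : eps K ≠ 0 := HahnSeries.single_ne_zero one_ne_zero

lemma eps_zpow (a : ℤ) : eps K ^ a = HahnSeries.single a 1 := by
  have hnat : ∀ k : ℕ, eps K ^ (k : ℤ) = HahnSeries.single (k : ℤ) 1 := by
    intro k
    rw [zpow_natCast, eps, HahnSeries.single_pow, one_pow, nsmul_eq_mul, mul_one]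
  cases a with
  | ofNat k => exact hnat k
  | negSucc k =>
    rw [zpow_negSucc, ← zpow_natCast (eps K) (k + 1)]
    rw [hnat (k + 1)]
    refine inv_eq_of_mul_eq_one_right ?_
    rw [HahnSeries.single_mul_single, one_mul]
    have : ((k : ℤ) + 1) + (Int.negSucc k) = 0 := by
      simp [Int.negSucc_eq]
    push_cast at this ⊢
    rw [this, HahnSeries.single_zero_one]

lemma val_eps_zpow (a : ℤ) : val (eps K ^ a) = (a : WithTop ℤ) := by
  rw [eps_zpow]
  exact HahnSeries.orderTop_single one_ne_zero

end ValLemmas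

section MatrixAux

variable {K : Type*} [Field K] {n : ℕ}

/-- Unitriangular with valuation bound `w p q` for `p < q`. -/
def MB (w : Fin n → Fin n → ℤ) (g : Matrix (Fin n) (Fin n) (LaurentSeries K)) : Prop :=
  Unitri g ∧ ∀ p q : Fin n, p < q → (w p q : WithTop ℤ) ≤ val (g p q)

/-- Strictly upper triangular with valuation bound `w p q` for `p < q`. -/
def SB (w : Fin n → Fin n → ℤ) (x : Matrix (Fin n) (Fin n) (LaurentSeries K)) : Prop :=
  (∀ p q : Fin n, ¬ p < q → x p q = 0) ∧
    ∀ p q : Fin n, p < q → (w p q : WithTop ℤ) ≤ val (x p q)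

lemma le_val_mul_of_le {a b : ℤ} {x y : LaurentSeries K}
    (hx : (a : WithTop ℤ) ≤ val x) (hy : (b : WithTop ℤ) ≤ val y) :
    ((a + b : ℤ) : WithTop ℤ) ≤ val (x * y) := by
  refine le_trans ?_ (add_le_val_mul x y)
  push_cast
  exact add_le_add hx hy

lemma val_entry_le_top {c : WithTop ℤ} : c ≤ val (0 : LaurentSeries K) := by
  rw [val_zero]; exact le_top

lemma SB_mul {w w' w'' : Fin n → Fin n → ℤ}
    {x y : Matrix (Fin n) (Fin n) (LaurentSeries K)}
    (hx : SB w x) (hy : SB w' y)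
    (hw : ∀ p r q : Fin n, p < r → r < q → w'' p q ≤ w p r + w' r q) :
    SB w'' (x * y) := by
  constructor
  · intro p q hpq
    rw [Matrix.mul_apply]
    refine Finset.sum_eq_zero fun r _ => ?_
    by_cases h1 : p < r
    · by_cases h2 : r < q
      · exact absurd (h1.trans h2) hpq
      · rw [hy.1 _ _ h2, mul_zero]
    · rw [hx.1 _ _ h1, zero_mul]
  · intro p q hpq
    rw [Matrix.mul_apply]
    refine le_val_sum _ _ _ fun r _ => ?_
    by_cases h1 : p < r
    · by_cases h2 : r < q
      · refine le_trans ?_ (le_val_mul_of_le (hx.2 _ _ h1) (hy.2 _ _ h2))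
        exact_mod_cast hw p r q h1 h2
      · rw [hy.1 _ _ h2, mul_zero]; exact val_entry_le_top
    · rw [hx.1 _ _ h1, zero_mul]; exact val_entry_le_top

lemma MB_mul_SB {w w' w'' : Fin n → Fin n → ℤ}
    {g y : Matrix (Fin n) (Fin n) (LaurentSeries K)}
    (hg : MB w g) (hy : SB w' y)
    (h1 : ∀ p q : Fin n, p < q → w'' p q ≤ w' p q)
    (h2 : ∀ p r q : Fin n, p < r → r < q → w'' p q ≤ w p r + w' r q) :
    SB w'' (g * y) := by
  constructor
  · intro p q hpq
    rw [Matrix.mul_apply]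
    refine Finset.sum_eq_zero fun r _ => ?_
    by_cases h3 : r < q
    · have hrp : r < p := lt_of_lt_of_le h3 (not_lt.mp hpq)
      rw [hg.1.2 _ _ hrp, zero_mul]
    · rw [hy.1 _ _ h3, mul_zero]
  · intro p q hpq
    rw [Matrix.mul_apply]
    refine le_val_sum _ _ _ fun r _ => ?_
    rcases lt_trichotomy p r with hpr | hpr | hpr
    · by_cases h3 : r < q
      · refine le_trans ?_ (le_val_mul_of_le (hg.2 _ _ hpr) (hy.2 _ _ h3))
        exact_mod_cast h2 p r q hpr h3
      · rw [hy.1 _ _ h3, mul_zero]; exact val_entry_le_top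
    · subst hpr
      rw [hg.1.1 p, one_mul]
      exact le_trans (by exact_mod_cast h1 p q hpq) (hy.2 _ _ hpq)
    · rw [hg.1.2 _ _ hpr, zero_mul]; exact val_entry_le_top

lemma SB_mul_MB {w w' w'' : Fin n → Fin n → ℤ}
    {y g : Matrix (Fin n) (Fin n) (LaurentSeries K)}
    (hy : SB w y) (hg : MB w' g)
    (h1 : ∀ p q : Fin n, p < q → w'' p q ≤ w p q)
    (h2 : ∀ p r q : Fin n, p < r → r < q → w'' p q ≤ w p r + w' r q) :
    SB w'' (y * g) := by
  constructor
  · intro p q hpq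
    rw [Matrix.mul_apply]
    refine Finset.sum_eq_zero fun r _ => ?_
    by_cases h3 : p < r
    · have hqr : q < r := lt_of_le_of_lt (not_lt.mp hpq) h3
      rw [hg.1.2 _ _ hqr, mul_zero]
    · rw [hy.1 _ _ h3, zero_mul]
  · intro p q hpq
    rw [Matrix.mul_apply]
    refine le_val_sum _ _ _ fun r _ => ?_
    by_cases h3 : p < r
    · rcases lt_trichotomy r q with hrq | hrq | hrq
      · refine le_trans ?_ (le_val_mul_of_le (hy.2 _ _ h3) (hg.2 _ _ hrq))
        exact_mod_cast h2 p r q h3 hrq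
      · subst hrq
        rw [hg.1.1 r, mul_one]
        exact le_trans (by exact_mod_cast h1 p r hpq) (hy.2 _ _ h3)
      · rw [hg.1.2 _ _ hrq, mul_zero]; exact val_entry_le_top
    · rw [hy.1 _ _ h3, zero_mul]; exact val_entry_le_top

lemma MB_mul {w w' w'' : Fin n → Fin n → ℤ}
    {g h : Matrix (Fin n) (Fin n) (LaurentSeries K)}
    (hg : MB w g) (hh : MB w' h)
    (h1 : ∀ p q : Fin n, p < q → w'' p q ≤ w p q)
    (h2 : ∀ p q : Fin n, p < q → w'' p q ≤ w' p q)
    (h3 : ∀ p r q : Fin n, p < r → r < q → w'' p q ≤ w p r + w' r q) :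
    MB w'' (g * h) := by
  refine ⟨⟨fun i => ?_, fun i j hji => ?_⟩, fun p q hpq => ?_⟩
  · rw [Matrix.mul_apply]
    rw [Finset.sum_eq_single i (fun r _ hri => ?_) (by simp)]
    · rw [hg.1.1 i, hh.1.1 i, one_mul]
    · rcases lt_or_gt_of_ne hri with hlt | hgt
      · rw [hg.1.2 _ _ hlt, zero_mul]
      · rw [hh.1.2 _ _ hgt, mul_zero]
  · rw [Matrix.mul_apply]
    refine Finset.sum_eq_zero fun r _ => ?_
    by_cases hir : r < i
    · rw [hg.1.2 _ _ hir, zero_mul]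
    · have : j < r := lt_of_lt_of_le hji (not_lt.mp hir)
      rw [hh.1.2 _ _ this, mul_zero]
  · rw [Matrix.mul_apply]
    refine le_val_sum _ _ _ fun r _ => ?_
    rcases lt_trichotomy p r with hpr | hpr | hpr
    · rcases lt_trichotomy r q with hrq | hrq | hrq
      · refine le_trans ?_ (le_val_mul_of_le (hg.2 _ _ hpr) (hh.2 _ _ hrq))
        exact_mod_cast h3 p r q hpr hrq
      · subst hrq
        rw [hh.1.1 r, mul_one]
        exact le_trans (by exact_mod_cast h1 p r hpq) (hg.2 _ _ hpr)
      · rw [hh.1.2 _ _ hrq, mul_zero]; exact val_entry_le_top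
    · subst hpr
      rw [hg.1.1 p, one_mul]
      exact le_trans (by exact_mod_cast h2 p q hpq) (hh.2 _ _ hpq)
    · rw [hg.1.2 _ _ hpr, zero_mul]; exact val_entry_le_top

lemma MB_sub_one {w : Fin n → Fin n → ℤ} {g : Matrix (Fin n) (Fin n) (LaurentSeries K)}
    (hg : MB w g) : SB w (g - 1) := by
  constructor
  · intro p q hpq
    rcases eq_or_ne p q with rfl | hne
    · simp [Matrix.sub_apply, hg.1.1 p, Matrix.one_apply_eq]
    · have hqp : q < p := lt_of_le_of_ne (not_lt.mp hpq) hne.symm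
      simp [Matrix.sub_apply, hg.1.2 _ _ hqp, Matrix.one_apply_ne hne]
  · intro p q hpq
    have hne : p ≠ q := ne_of_lt hpq
    rw [Matrix.sub_apply, Matrix.one_apply_ne hne, sub_zero]
    exact hg.2 _ _ hpq

lemma MB_one_add {w : Fin n → Fin n → ℤ} {x : Matrix (Fin n) (Fin n) (LaurentSeries K)}
    (hx : SB w x) : MB w (1 + x) := by
  refine ⟨⟨fun i => ?_, fun i j hji => ?_⟩, fun p q hpq => ?_⟩
  · rw [Matrix.add_apply, Matrix.one_apply_eq, hx.1 _ _ (lt_irrefl i), add_zero]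
  · rw [Matrix.add_apply, Matrix.one_apply_ne (ne_of_gt hji),
      hx.1 _ _ (not_lt.mpr (le_of_lt hji)), add_zero]
  · rw [Matrix.add_apply, Matrix.one_apply_ne (ne_of_lt hpq), zero_add]
    exact hx.2 _ _ hpq

lemma SB_pow_entry {w : Fin n → Fin n → ℤ} {x : Matrix (Fin n) (Fin n) (LaurentSeries K)}
    (hx : SB w x) : ∀ (k : ℕ) (p q : Fin n), (q : ℕ) < (p : ℕ) + k → (x ^ k) p q = 0 := by
  intro k
  induction k with
  | zero =>
    intro p q hq
    rw [pow_zero]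
    exact Matrix.one_apply_ne (by rintro rfl; omega)
  | succ k ih =>
    intro p q hq
    rw [pow_succ, Matrix.mul_apply]
    refine Finset.sum_eq_zero fun r _ => ?_
    by_cases h1 : (r : ℕ) < (p : ℕ) + k
    · rw [ih p r h1, zero_mul]
    · have : ¬ r < q := by
        rw [Fin.lt_def]; omega
      rw [hx.1 _ _ this, mul_zero]

lemma SB_pow_n_eq_zero {w : Fin n → Fin n → ℤ} {x : Matrix (Fin n) (Fin n) (LaurentSeries K)}
    (hx : SB w x) : x ^ n = 0 := by
  ext p q
  rw [SB_pow_entry hx n p q (by omega), Matrix.zero_apply]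

lemma SB_pow {w : Fin n → Fin n → ℤ} {x : Matrix (Fin n) (Fin n) (LaurentSeries K)}
    (hw : ∀ p r q : Fin n, p < r → r < q → w p q ≤ w p r + w r q)
    (hx : SB w x) : ∀ k : ℕ, 1 ≤ k → SB w (x ^ k) := by
  intro k
  induction k with
  | zero => omega
  | succ k ih =>
    intro _
    rcases Nat.eq_zero_or_pos k with rfl | hk
    · rw [pow_one]; exact hx
    · rw [pow_succ]
      exact SB_mul (ih hk) hx hw

lemma unitri_det {g : Matrix (Fin n) (Fin n) (LaurentSeries K)} (hg : Unitri g) :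
    g.det = 1 := by
  rw [Matrix.det_of_upperTriangular (fun i j hji => hg.2 i j hji)]
  simp [hg.1]

lemma unitri_isUnit_det {g : Matrix (Fin n) (Fin n) (LaurentSeries K)} (hg : Unitri g) :
    IsUnit g.det := by rw [unitri_det hg]; exact isUnit_one

lemma MB_inv {w : Fin n → Fin n → ℤ} {g : Matrix (Fin n) (Fin n) (LaurentSeries K)}
    (hw : ∀ p r q : Fin n, p < r → r < q → w p q ≤ w p r + w r q)
    (hg : MB w g) : MB w g⁻¹ := by
  classical
  set x : Matrix (Fin n) (Fin n) (LaurentSeries K) := 1 - g with hxdef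
  have hx : SB w x := by
    have h1 : SB w (g - 1) := MB_sub_one hg
    constructor
    · intro p q hpq
      have : x p q = -((g - 1) p q) := by
        simp [hxdef, Matrix.sub_apply]
      rw [this, h1.1 _ _ hpq, neg_zero]
    · intro p q hpq
      have : x p q = -((g - 1) p q) := by
        simp [hxdef, Matrix.sub_apply]
      rw [this]
      show (w p q : WithTop ℤ) ≤ HahnSeries.orderTop _
      rw [HahnSeries.orderTop_neg]
      exact h1.2 _ _ hpq
  have hginv : g⁻¹ = ∑ i ∈ Finset.range n, x ^ i := by
    refine Matrix.inv_eq_right_inv ?_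
    have := mul_neg_geom_sum (R := Matrix (Fin n) (Fin n) (LaurentSeries K)) x n
    rw [SB_pow_n_eq_zero hx, sub_zero] at this
    calc g * ∑ i ∈ Finset.range n, x ^ i
        = (1 - x) * ∑ i ∈ Finset.range n, x ^ i := by rw [hxdef, sub_sub_cancel]
      _ = 1 := this
  rw [hginv]
  refine ⟨⟨fun i => ?_, fun i j hji => ?_⟩, fun p q hpq => ?_⟩
  · rw [Matrix.sum_apply]
    rw [Finset.sum_eq_single 0 (fun k _ hk => ?_) (by simp [i.pos])]
    · rw [pow_zero, Matrix.one_apply_eq]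
    · exact SB_pow_entry hx k i i (by omega)
  · rw [Matrix.sum_apply]
    refine Finset.sum_eq_zero fun k _ => ?_
    rcases Nat.eq_zero_or_pos k with rfl | hk
    · rw [pow_zero]; exact Matrix.one_apply_ne (ne_of_gt hji)
    · exact (SB_pow hw hx k hk).1 _ _ (not_lt.mpr (le_of_lt hji))
  · rw [Matrix.sum_apply]
    refine le_val_sum _ _ _ fun k _ => ?_
    rcases Nat.eq_zero_or_pos k with rfl | hk
    · rw [pow_zero, Matrix.one_apply_ne (ne_of_lt hpq)]
      exact val_entry_le_top
    · exact (SB_pow hw hx k hk).2 _ _ hpq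

lemma epsDiag_mul_epsDiag (ν ν' : Fin n → ℤ) :
    epsDiag K ν * epsDiag K ν' = epsDiag K (fun i => ν i + ν' i) := by
  rw [epsDiag, epsDiag, epsDiag, Matrix.diagonal_mul_diagonal]
  have he : (fun i => eps K ^ ν i * eps K ^ ν' i) = fun i => eps K ^ (ν i + ν' i) :=
    funext fun i => (zpow_add₀ (eps_ne_zero (K := K)) _ _).symm
  rw [he]

lemma epsDiag_zero : epsDiag K (fun _ : Fin n => (0 : ℤ)) = 1 := by
  simp [epsDiag]

lemma MB_conjEps {w : Fin n → Fin n → ℤ} {ν : Fin n → ℤ} (hν : StrictDominant ν)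
    {h : Matrix (Fin n) (Fin n) (LaurentSeries K)} (hh : MB w h) :
    MB w (epsDiag K ν * h * epsDiag K (fun i => -ν i)) := by
  have hentry : ∀ p q : Fin n, (epsDiag K ν * h * epsDiag K (fun i => -ν i)) p q
      = eps K ^ (ν p) * h p q * eps K ^ (-(ν q)) := by
    intro p q
    rw [epsDiag, epsDiag, Matrix.mul_diagonal, Matrix.diagonal_mul]
  refine ⟨⟨fun i => ?_, fun i j hji => ?_⟩, fun p q hpq => ?_⟩
  · rw [hentry, hh.1.1 i, mul_one, ← zpow_add₀ (eps_ne_zero (K := K)), add_neg_cancel, zpow_zero]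
  · rw [hentry, hh.1.2 _ _ hji, mul_zero, zero_mul]
  · rw [hentry]
    have hb : ((ν p + w p q + -(ν q) : ℤ) : WithTop ℤ) ≤
        val (eps K ^ (ν p) * h p q * eps K ^ (-(ν q))) := by
      have e1 : ((ν p + w p q : ℤ) : WithTop ℤ) ≤ val (eps K ^ (ν p) * h p q) := by
        refine le_trans ?_ (add_le_val_mul _ _)
        rw [val_eps_zpow]
        push_cast
        exact add_le_add le_rfl (hh.2 _ _ hpq)
      refine le_trans ?_ (add_le_val_mul _ _)
      rw [val_eps_zpow]
      push_cast at e1 ⊢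
      exact add_le_add e1 le_rfl
    refine le_trans ?_ hb
    rw [WithTop.coe_le_coe]
    have := hν p q hpq
    omega

end MatrixAux

section SigmaAux

variable {K : Type*} [Field K]

lemma val_sigma {qc : ℕ} {σ : LaurentSeries K → LaurentSeries K}
    (hσ : IsFrobenius K qc σ) (hq : qc ≠ 0) (x : LaurentSeries K) : val (σ x) = val x := by
  have key : ∀ y z : LaurentSeries K, y ≠ 0 → (∀ nn, y.coeff nn ≠ 0 → z.coeff nn ≠ 0) →
      val z ≤ val y := by
    intro y z hy hc
    cases hg : y.orderTop with
    | top => exact absurd (HahnSeries.orderTop_eq_top.mp hg) hy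
    | coe gg =>
      have h2 := hc gg (HahnSeries.coeff_orderTop_ne hg)
      calc val z ≤ (gg : WithTop ℤ) := HahnSeries.orderTop_le_of_coeff_ne_zero h2
        _ = val y := hg.symm
  by_cases hx : x = 0
  · subst hx
    have h0 : σ 0 = 0 := by
      ext nn
      rw [hσ]
      simp [zero_pow hq]
    rw [h0]
  · have hsx : σ x ≠ 0 := by
      intro hc
      apply hx
      ext nn
      have h0 : (σ x).coeff nn = 0 := by rw [hc]; simp
      rw [hσ] at h0
      simpa using (pow_eq_zero_iff hq).mp h0
    refine le_antisymm (key x (σ x) hx fun nn hnn => ?_) (key (σ x) x hsx fun nn hnn => ?_)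
    · rw [hσ]; exact pow_ne_zero _ hnn
    · intro hc
      apply hnn
      rw [hσ, hc, zero_pow hq]

end SigmaAux

/-- if `ν` is strictly dominant, `g, g' ∈ U_N` and `g⁻¹·g' ∈ U_{m,N}`, then
`(f_ν(g))⁻¹·f_ν(g') ∈ U_{m,N}`. -/
theorem fnu_well_defined_mod_UmN (F : Type*) [Field F] [Fintype F]
    (n : ℕ) (hn : 2 ≤ n)
    (σ : LaurentSeries (AlgebraicClosure F) → LaurentSeries (AlgebraicClosure F))
    (hσ : IsFrobenius (AlgebraicClosure F) (Fintype.card F) σ)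
    (ν : Fin n → ℤ) (hν : StrictDominant ν) (N m : ℤ) (hm : 0 < m)
    (g g' : Matrix (Fin n) (Fin n) (LaurentSeries (AlgebraicClosure F)))
    (hg : g ∈ UN (AlgebraicClosure F) n N) (hg' : g' ∈ UN (AlgebraicClosure F) n N)
    (h : g⁻¹ * g' ∈ UmN (AlgebraicClosure F) n m N) :
    (fnu σ ν g)⁻¹ * fnu σ ν g' ∈ UmN (AlgebraicClosure F) n m N := by
  classical
  -- characteristic facts
  have hq0 : Fintype.card F ≠ 0 := by
    have : 0 < Fintype.card F := Fintype.card_pos_iff.mpr ⟨0⟩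
    omega
  haveI hcp : CharP F (ringChar F) := ringChar.charP F
  haveI : Fact (ringChar F).Prime := ⟨CharP.char_is_prime F (ringChar F)⟩
  obtain ⟨k, hkp, hcard⟩ := FiniteField.card F (ringChar F)
  haveI : CharP (AlgebraicClosure F) (ringChar F) :=
    charP_of_injective_algebraMap (algebraMap F (AlgebraicClosure F)).injective (ringChar F)
  -- σ is a ring homomorphism
  have hone : σ 1 = 1 := by
    ext nn
    rw [hσ, HahnSeries.coeff_one]
    split_ifs
    · exact one_pow _
    · exact zero_pow hq0
  have hzero : σ 0 = 0 := by
    ext nn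
    rw [hσ]
    simp [zero_pow hq0]
  have hadd : ∀ x y, σ (x + y) = σ x + σ y := by
    intro x y
    ext nn
    rw [HahnSeries.coeff_add, hσ, hσ, hσ, HahnSeries.coeff_add, hcard]
    exact add_pow_char_pow _ _ _ _
  let φ : AlgebraicClosure F →+* AlgebraicClosure F :=
    { toFun := fun a => a ^ Fintype.card F
      map_one' := one_pow _
      map_mul' := fun a b => mul_pow a b _
      map_zero' := zero_pow hq0
      map_add' := fun a b => by
        show (a + b) ^ Fintype.card F = a ^ Fintype.card F + b ^ Fintype.card F
        rw [hcard]
        exact add_pow_char_pow _ _ _ _ }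
  have hmul : ∀ x y, σ (x * y) = σ x * σ y := by
    have he : ∀ z : LaurentSeries (AlgebraicClosure F),
        σ z = z.map φ.toNonUnitalRingHom := by
      intro z
      ext nn
      simp only [HahnSeries.map_coeff]
      exact hσ z nn
    intro x y
    rw [he, he, he]
    exact HahnSeries.map_mul _
  let σM : LaurentSeries (AlgebraicClosure F) →* LaurentSeries (AlgebraicClosure F) :=
    { toFun := σ, map_one' := hone, map_mul' := hmul }
  let σR := RingHom.mk' σM hadd
  have hmapmul : ∀ A B : Matrix (Fin n) (Fin n) (LaurentSeries (AlgebraicClosure F)),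
      (A * B).map σ = A.map σ * B.map σ := by
    intro A B
    have hco : σ = ⇑σR := rfl
    rw [hco]
    exact Matrix.map_mul
  have hvs : ∀ x, val (σ x) = val x := val_sigma hσ hq0
  -- weights
  set wN : Fin n → Fin n → ℤ := fun p q => ((q : ℤ) - (p : ℤ)) * N with hwN
  set wm : Fin n → Fin n → ℤ := fun p q => ((q : ℤ) - (p : ℤ)) * N + m with hwm
  have hsplit : ∀ p r q : Fin n, wN p r + wN r q = wN p q := by
    intro p r q
    simp only [hwN]
    ring
  have HwN : ∀ p r q : Fin n, p < r → r < q → wN p q ≤ wN p r + wN r q := by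
    intro p r q _ _
    rw [hsplit]
  have Hwm : ∀ p r q : Fin n, p < r → r < q → wm p q ≤ wm p r + wm r q := by
    intro p r q _ _
    have := hsplit p r q
    simp only [hwm, hwN] at this ⊢
    linarith
  have Hmix : ∀ p r q : Fin n, p < r → r < q → wm p q ≤ wN p r + wm r q := by
    intro p r q _ _
    have := hsplit p r q
    simp only [hwm, hwN] at this ⊢
    linarith
  have Hmix2 : ∀ p r q : Fin n, p < r → r < q → wm p q ≤ wm p r + wN r q := by
    intro p r q _ _
    have := hsplit p r q
    simp only [hwm, hwN] at this ⊢
    linarith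
  -- membership translations
  have hgM : MB wN g := hg
  have hg'M : MB wN g' := hg'
  have hu : MB wm (g⁻¹ * g') := h
  -- σ preserves the bounds
  have hmapMB : ∀ (w : Fin n → Fin n → ℤ)
      (A : Matrix (Fin n) (Fin n) (LaurentSeries (AlgebraicClosure F))),
      MB w A → MB w (A.map σ) := by
    intro w A hA
    refine ⟨⟨fun i => ?_, fun i j hji => ?_⟩, fun pp qq hpq => ?_⟩
    · rw [Matrix.map_apply, hA.1.1, hone]
    · rw [Matrix.map_apply, hA.1.2 _ _ hji, hzero]
    · rw [Matrix.map_apply, hvs]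
      exact hA.2 _ _ hpq
  set D := epsDiag (AlgebraicClosure F) ν with hD_def
  set D' := epsDiag (AlgebraicClosure F) (fun i => -ν i) with hD'_def
  have hD'D : D' * D = 1 := by
    rw [hD'_def, hD_def, epsDiag_mul_epsDiag]
    have he : (fun i => -ν i + ν i) = fun _ : Fin n => (0 : ℤ) := funext fun i => by ring
    rw [he, epsDiag_zero]
  -- the main pieces
  have hgi : MB wN g⁻¹ := MB_inv HwN hgM
  have hcg : MB wN (D * g.map σ * D') := MB_conjEps hν (hmapMB wN g hgM)
  have hf : MB wN (fnu σ ν g) := by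
    have he : fnu σ ν g = g⁻¹ * (D * g.map σ * D') := by
      simp only [fnu, ← hD_def, ← hD'_def, mul_assoc]
    rw [he]
    exact MB_mul hgi hcg (fun p q _ => le_rfl) (fun p q _ => le_rfl) HwN
  have hfi : MB wN (fnu σ ν g)⁻¹ := MB_inv HwN hf
  have hui : MB wm (g⁻¹ * g')⁻¹ := MB_inv Hwm hu
  set u := g⁻¹ * g' with hu_def
  set f := fnu σ ν g with hf_def
  set y := u⁻¹ - 1 with hy_def
  have hy : SB wm y := MB_sub_one hui
  have hz1 : SB wm (f⁻¹ * y) := MB_mul_SB hfi hy (fun p q _ => le_rfl) Hmix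
  have hz : SB wm (f⁻¹ * y * f) := SB_mul_MB hz1 hf (fun p q _ => le_rfl) Hmix2
  have hT : MB wm (f⁻¹ * u⁻¹ * f) := by
    have hu1 : u⁻¹ = 1 + y := by rw [hy_def]; abel
    have he : f⁻¹ * u⁻¹ * f = 1 + f⁻¹ * y * f := by
      rw [hu1, mul_add, mul_one, add_mul, Matrix.nonsing_inv_mul f (unitri_isUnit_det hf.1)]
    rw [he]
    exact MB_one_add hz
  have hc : MB wm (D * u.map σ * D') := MB_conjEps hν (hmapMB wm u hu)
  -- the algebraic identity
  have hgg' : g * u = g' := by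
    rw [hu_def, ← mul_assoc, Matrix.mul_nonsing_inv g (unitri_isUnit_det hgM.1), one_mul]
  have hkey : f⁻¹ * fnu σ ν g' = f⁻¹ * u⁻¹ * f * (D * u.map σ * D') := by
    have h1 : fnu σ ν g' = u⁻¹ * f * (D * u.map σ * D') := by
      rw [← hgg']
      show (g * u)⁻¹ * D * (g * u).map σ * D' = _
      rw [Matrix.mul_inv_rev, hmapmul g u, hf_def]
      show _ = u⁻¹ * (g⁻¹ * D * g.map σ * D') * (D * u.map σ * D')
      simp only [mul_assoc]
      rw [← mul_assoc D' D, hD'D, one_mul]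
    rw [h1]
    simp only [mul_assoc]
  have hres : MB wm (f⁻¹ * u⁻¹ * f * (D * u.map σ * D')) :=
    MB_mul hT hc (fun p q _ => le_rfl) (fun p q _ => le_rfl) Hwm
  have hfin : MB wm (f⁻¹ * fnu σ ν g') := by
    rw [hkey]
    exact hres
  exact hfin
end
end
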